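/- The Marchenko–Pastur distribution $\varrho_t$ with shape parameter $t>0$ has $k$-th moment equal to the Narayana polynomial $N_k(t) = \sum_{j=1}^k \frac{1}{j}\binom{k-1}{j-1}\binom{k}{j-1} t^j$, i.e., $\int x^k\, d\varrho_t(x) = N_k(t)$ for all $k\geq 1$. -/

import Mathlib

open MeasureTheory

noncomputable def mpMeasure (t : ℝ) : Measure ℝ :=
  ENNReal.ofReal (max (1 - t) 0) • Measure.dirac 0 +
  volume.withDensity (fun x => ENNReal.ofReal (
    if (1 - Real.sqrt t) ^ 2 ≤ x ∧ x ≤ (1 + Real.sqrt t) ^ 2 then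
      Real.sqrt ((x - (1 - Real.sqrt t) ^ 2) * ((1 + Real.sqrt t) ^ 2 - x)) /
        (2 * Real.pi * x)
    else 0))

open MeasureTheory intervalIntegral Real Finset

/-- The Marchenko–Pastur distribution with shape parameter `t`:
`ϱ_t = max{1-t,0} δ₀ + (√((x-a)(b-x)) / (2πx)) 1_{[a,b]}(x) dx`
with `a = (1-√t)²`, `b = (1+√t)²`. -/
-- auxiliary lemmas

lemma K_int (m : ℤ) : ∫ θ in (0:ℝ)..π, Real.cos (m * θ) = if m = 0 then π else 0 := by
  rcases eq_or_ne m 0 with h | h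
  · simp [h, Real.pi_pos.le]
  · rw [if_neg h]
    have hc : (m:ℝ) ≠ 0 := Int.cast_ne_zero.mpr h
    have := intervalIntegral.integral_comp_mul_left (a := (0:ℝ)) (b := π) (fun x => Real.cos x) hc
    simp only [mul_zero] at this
    rw [this, integral_cos]
    simp [Real.sin_int_mul_pi, smul_eq_mul]

lemma trig_pt (a b : ℝ) : Real.cos a * Real.sin b ^ 2 =
    1/2 * Real.cos a - 1/4 * Real.cos (a + 2*b) - 1/4 * Real.cos (a - 2*b) := by
  simp [Real.cos_add, Real.cos_sub, Real.cos_two_mul, Real.sin_two_mul, Real.sin_sq]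
  ring

lemma I_int (m : ℤ) : ∫ θ in (0:ℝ)..π, Real.cos (m * θ) * Real.sin θ ^ 2 =
    if m = 0 then π/2 else if m = 2 ∨ m = -2 then -(π/4) else 0 := by
  have h1 : ∀ θ : ℝ, Real.cos (m * θ) * Real.sin θ ^ 2 =
      1/2 * Real.cos (m*θ) - 1/4 * Real.cos ((m+2)*θ) - 1/4 * Real.cos ((m-2)*θ) := by
    intro θ
    have := trig_pt (m*θ) θ
    rw [this]
    push_cast
    ring_nf
  rw [intervalIntegral.integral_congr (fun θ _ => h1 θ)]
  rw [intervalIntegral.integral_sub, intervalIntegral.integral_sub]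
  · rw [intervalIntegral.integral_const_mul, intervalIntegral.integral_const_mul,
      intervalIntegral.integral_const_mul]
    have k1 := K_int m
    have k2 := K_int (m+2)
    have k3 := K_int (m-2)
    push_cast at k1 k2 k3
    rw [k1, k2, k3]
    rcases eq_or_ne m 0 with h | h
    · simp [h]; ring
    · rcases eq_or_ne m 2 with h2 | h2
      · simp [h, h2]; ring
      · rcases eq_or_ne m (-2) with h3 | h3
        · simp [h, h2, h3]; ring
        · have : ¬ (m = 2 ∨ m = -2) := by tauto
          simp [h, h2, h3, this, sub_eq_zero, add_eq_zero_iff_eq_neg]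
  all_goals
    apply Continuous.intervalIntegrable
    fun_prop

lemma expand_pow (n : ℕ) (u θ : ℝ) :
    (1 + u^2 + 2*u*Real.cos θ)^n = ∑ p ∈ range (n+1), ∑ q ∈ range (n+1),
      (n.choose p * n.choose q : ℝ) * u^(p+q) * Real.cos (((p:ℝ) - (q:ℝ)) * θ) := by
  set z : ℂ := Complex.exp (θ * Complex.I) with hzdef
  have hzre : z.re = Real.cos θ := by
    rw [hzdef, Complex.exp_ofReal_mul_I_re]
  have hznorm : z * (starRingEnd ℂ) z = 1 := by
    rw [Complex.mul_conj]
    norm_cast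
    simp [hzdef, Complex.normSq_eq_norm_sq, Complex.norm_exp_ofReal_mul_I]
  have key : ((1 + u^2 + 2*u*Real.cos θ : ℝ) : ℂ) = ((u:ℂ)*z + 1) * ((u:ℂ) * (starRingEnd ℂ) z + 1) := by
    have hre : z + (starRingEnd ℂ) z = 2 * ((Real.cos θ : ℝ) : ℂ) := by
      rw [Complex.add_conj, hzre, Complex.ofReal_mul]
      norm_num
    calc ((1 + u^2 + 2*u*Real.cos θ : ℝ) : ℂ)
        = 1 + (u:ℂ)^2 * (z * (starRingEnd ℂ) z) + (u:ℂ) * (z + (starRingEnd ℂ) z) := by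
          rw [hznorm, hre]
          push_cast
          ring
      _ = ((u:ℂ)*z + 1) * ((u:ℂ) * (starRingEnd ℂ) z + 1) := by ring
  have expz : ∀ p : ℕ, z ^ p = Complex.exp (((p : ℝ) * θ : ℝ) * Complex.I) := by
    intro p
    rw [hzdef, ← Complex.exp_nat_mul]
    congr 1
    push_cast
    ring
  have expzc : ∀ q : ℕ, ((starRingEnd ℂ) z) ^ q = Complex.exp ((-((q : ℝ) * θ) : ℝ) * Complex.I) := by
    intro q
    rw [← map_pow, expz q, ← Complex.exp_conj]
    congr 1
    rw [map_mul, Complex.conj_I, Complex.conj_ofReal, Complex.ofReal_neg]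
    ring
  have main : ((1 + u^2 + 2*u*Real.cos θ : ℝ) : ℂ)^n =
      ∑ p ∈ range (n+1), ∑ q ∈ range (n+1),
        ((n.choose p * n.choose q * u^(p+q) : ℝ) : ℂ) * Complex.exp ((((p:ℝ) - (q:ℝ)) * θ : ℝ) * Complex.I) := by
    rw [key, mul_pow, add_pow, add_pow]
    rw [Finset.sum_mul_sum]
    apply Finset.sum_congr rfl
    intro p hp
    apply Finset.sum_congr rfl
    intro q hq
    rw [one_pow, one_pow, mul_pow, mul_pow, expz, expzc, mul_one, mul_one]
    rw [show ((u:ℂ)^p * Complex.exp (((p:ℝ)*θ:ℝ) * Complex.I) * (n.choose p : ℂ)) *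
        ((u:ℂ)^q * Complex.exp ((-((q:ℝ)*θ):ℝ) * Complex.I) * (n.choose q : ℂ)) =
        ((n.choose p : ℂ) * (n.choose q : ℂ) * ((u:ℂ)^p * (u:ℂ)^q)) *
        (Complex.exp (((p:ℝ)*θ:ℝ) * Complex.I) * Complex.exp ((-((q:ℝ)*θ):ℝ) * Complex.I)) from by ring]
    rw [← Complex.exp_add]
    have : (((p:ℝ)*θ:ℝ) : ℂ) * Complex.I + ((-((q:ℝ)*θ):ℝ) : ℂ) * Complex.I
        = ((((p:ℝ) - (q:ℝ)) * θ : ℝ) : ℂ) * Complex.I := by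
      push_cast
      ring
    rw [this]
    push_cast
    ring
  have := congrArg Complex.re main
  rw [← Complex.ofReal_pow, Complex.ofReal_re] at this
  rw [this, Complex.re_sum]
  apply Finset.sum_congr rfl
  intro p hp
  rw [Complex.re_sum]
  apply Finset.sum_congr rfl
  intro q hq
  rw [Complex.re_ofReal_mul, Complex.exp_ofReal_mul_I_re]

open Finset

lemma comb_id (n i : ℕ) (h : i ≤ n) :
    ((n.choose i : ℝ))^2 - (if 1 ≤ i then ((n.choose (i-1) : ℝ) * (n.choose (i+1) : ℝ)) else 0)
      = ((n.choose i : ℝ) * (((n+1).choose i : ℝ))) / ((i : ℝ)+1) := by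
  rcases Nat.eq_zero_or_pos i with hi | hi
  · subst hi; simp
  · rw [if_pos (Nat.one_le_iff_ne_zero.mpr (Nat.pos_iff_ne_zero.mp hi))]
    obtain ⟨m, rfl⟩ : ∃ m, i = m + 1 := ⟨i - 1, (Nat.succ_pred_eq_of_pos hi).symm⟩
    set a : ℝ := (n.choose m : ℝ)
    set b : ℝ := (n.choose (m+1) : ℝ)
    set c : ℝ := (n.choose (m+2) : ℝ)
    set e : ℝ := ((n+1).choose (m+1) : ℝ)
    have hmn : m + 1 ≤ n := h
    have f1 : c * ((m:ℝ)+2) = b * ((n : ℝ) - ((m:ℝ)+1)) := by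
      have := Nat.choose_succ_right_eq n (m+1)
      have hcast := congrArg (Nat.cast : ℕ → ℝ) this
      push_cast [Nat.cast_sub hmn] at hcast
      convert hcast using 1 <;> ring
    have f2 : b * ((m:ℝ)+1) = a * ((n:ℝ) + 1 - ((m:ℝ)+1)) := by
      have := Nat.choose_succ_right_eq n m
      have hcast := congrArg (Nat.cast : ℕ → ℝ) this
      push_cast [Nat.cast_sub (le_trans (Nat.le_succ m) hmn)] at hcast
      convert hcast using 1 <;> ring
    have f3 : b * ((n:ℝ)+1) = e * ((n:ℝ) + 1 - ((m:ℝ)+1)) := by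
      have := Nat.choose_mul_succ_eq n (m+1)
      rw [Nat.succ_sub_succ] at this
      have hcast := congrArg (Nat.cast : ℕ → ℝ) this
      have hmn' : m ≤ n := le_trans (Nat.le_succ m) hmn
      push_cast [Nat.cast_sub hmn'] at hcast
      rw [hcast]; ring
    have hne : ((m:ℝ)+1) + 1 ≠ 0 := by positivity
    have hne2 : (n:ℝ) + 1 - ((m:ℝ)+1) ≠ 0 := by
      have : (m:ℝ) + 1 ≤ (n:ℝ) := by exact_mod_cast hmn
      intro hcon; nlinarith
    simp only [Nat.add_sub_cancel]
    push_cast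
    rw [eq_div_iff hne]
    apply mul_left_cancel₀ hne2
    linear_combination (-((n:ℝ)+1-((m:ℝ)+1))*a) * f1 + (((n:ℝ)-((m:ℝ)+1))*b) * f2 + b * f3
noncomputable def Jval (p q : ℕ) : ℝ :=
  if p = q then π/2 else if p = q+2 then -(π/4) else if q = p+2 then -(π/4) else 0
lemma step3 (t : ℝ) (ht : 0 < t) (n : ℕ) :
    ∫ θ in (0:ℝ)..π, (1 + (Real.sqrt t)^2 + 2*(Real.sqrt t)*Real.cos θ)^n * Real.sin θ^2 * (2*t/π) =
    ∑ p ∈ range (n+1), ∑ q ∈ range (n+1),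
      (n.choose p * n.choose q : ℝ) * (Real.sqrt t)^(p+q) * (2*t/π) * Jval p q := by
  set u := Real.sqrt t with hu
  have h1 : ∀ θ : ℝ, (1 + u^2 + 2*u*Real.cos θ)^n * Real.sin θ^2 * (2*t/π) =
      ∑ p ∈ range (n+1), ∑ q ∈ range (n+1),
        (n.choose p * n.choose q : ℝ) * u^(p+q) * (2*t/π) * (Real.cos (((p:ℝ) - (q:ℝ)) * θ) * Real.sin θ^2) := by
    intro θ
    rw [expand_pow n u θ, Finset.sum_mul, Finset.sum_mul]
    apply Finset.sum_congr rfl; intro p _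
    rw [Finset.sum_mul, Finset.sum_mul]
    apply Finset.sum_congr rfl; intro q _
    ring
  rw [intervalIntegral.integral_congr (fun θ _ => h1 θ)]
  rw [intervalIntegral.integral_finset_sum]
  swap
  · intro p _
    exact (continuous_finset_sum _ fun q _ => by fun_prop).intervalIntegrable _ _
  apply Finset.sum_congr rfl; intro p _
  rw [intervalIntegral.integral_finset_sum]
  swap
  · intro q _
    apply Continuous.intervalIntegrable
    fun_prop
  apply Finset.sum_congr rfl; intro q _
  rw [intervalIntegral.integral_const_mul]
  congr 1
  have hcast : ∀ θ : ℝ, Real.cos (((p:ℝ) - (q:ℝ)) * θ) = Real.cos (((((p:ℤ) - (q:ℤ)) : ℤ) : ℝ) * θ) := by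
    intro θ
    congr 1
    push_cast
    ring
  rw [intervalIntegral.integral_congr (fun θ _ => by rw [hcast θ])]
  rw [I_int ((p:ℤ) - (q:ℤ))]
  rw [Jval]
  rcases eq_or_ne p q with h | h
  · simp [h]
  · have h' : ¬ ((p:ℤ) - (q:ℤ) = 0) := by omega
    rw [if_neg h', if_neg h]
    by_cases h2 : p = q + 2
    · have : (p:ℤ) - (q:ℤ) = 2 ∨ (p:ℤ) - (q:ℤ) = -2 := by left; omega
      rw [if_pos this, if_pos h2]
    · by_cases h3 : q = p + 2
      · have : (p:ℤ) - (q:ℤ) = 2 ∨ (p:ℤ) - (q:ℤ) = -2 := by right; omega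
        rw [if_pos this, if_neg h2, if_pos h3]
      · have : ¬((p:ℤ) - (q:ℤ) = 2 ∨ (p:ℤ) - (q:ℤ) = -2) := by omega
        rw [if_neg this, if_neg h2, if_neg h3]
lemma step4 (t : ℝ) (ht : 0 < t) (n : ℕ) :
    ∑ p ∈ range (n+1), ∑ q ∈ range (n+1),
      (n.choose p * n.choose q : ℝ) * (Real.sqrt t)^(p+q) * (2*t/π) * Jval p q
    = t * (∑ p ∈ range (n+1), ((n.choose p : ℝ))^2 * t^p)
      - t * (∑ q ∈ range (n+1), if q + 2 ≤ n then ((n.choose q : ℝ) * (n.choose (q+2) : ℝ)) * t^(q+1) else 0) := by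
  set u := Real.sqrt t with hu
  have hut : u^2 = t := Real.sq_sqrt ht.le
  have hπ : (π:ℝ) ≠ 0 := Real.pi_ne_zero
  set c : ℕ → ℕ → ℝ := fun p q => (n.choose p * n.choose q : ℝ) * u^(p+q) * (2*t/π) with hc
  have hsplit : ∀ p q : ℕ, c p q * Jval p q =
      ((if q = p then c p q * (π/2) else 0) + (if p = q+2 then c p q * (-(π/4)) else 0))
        + (if q = p+2 then c p q * (-(π/4)) else 0) := by
    intro p q
    rw [Jval]
    rcases eq_or_ne p q with h | h
    · rw [if_pos h, if_pos h.symm, if_neg (by omega), if_neg (by omega)]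
      ring
    · rw [if_neg h, if_neg (Ne.symm h)]
      by_cases h2 : p = q + 2
      · rw [if_pos h2, if_pos h2, if_neg (by omega)]
        ring
      · rw [if_neg h2, if_neg h2]
        by_cases h3 : q = p + 2
        · rw [if_pos h3, if_pos h3]; ring
        · rw [if_neg h3, if_neg h3]; ring
  have hLHS : ∑ p ∈ range (n+1), ∑ q ∈ range (n+1), c p q * Jval p q
      = (∑ p ∈ range (n+1), ∑ q ∈ range (n+1), (if q = p then c p q * (π/2) else 0))
        + (∑ p ∈ range (n+1), ∑ q ∈ range (n+1), (if p = q+2 then c p q * (-(π/4)) else 0))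
        + (∑ p ∈ range (n+1), ∑ q ∈ range (n+1), (if q = p+2 then c p q * (-(π/4)) else 0)) := by
    rw [← Finset.sum_add_distrib, ← Finset.sum_add_distrib]
    apply Finset.sum_congr rfl; intro p _
    rw [← Finset.sum_add_distrib, ← Finset.sum_add_distrib]
    exact Finset.sum_congr rfl fun q _ => hsplit p q
  have e1 : ∑ p ∈ range (n+1), ∑ q ∈ range (n+1), (if q = p then c p q * (π/2) else 0)
      = ∑ p ∈ range (n+1), ((n.choose p : ℝ))^2 * t^p * t := by
    apply Finset.sum_congr rfl; intro p hp
    rw [Finset.sum_ite_eq' (range (n+1)) p (fun q => c p q * (π/2)), if_pos hp, hc]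
    dsimp only
    rw [show p + p = 2*p by ring, pow_mul, hut]
    field_simp
  have e2 : ∑ p ∈ range (n+1), ∑ q ∈ range (n+1), (if p = q+2 then c p q * (-(π/4)) else 0)
      = ∑ q ∈ range (n+1), (if q + 2 ≤ n then ((n.choose q : ℝ) * (n.choose (q+2) : ℝ)) * t^(q+1) * (-(t/2)) else 0) := by
    rw [Finset.sum_comm]
    apply Finset.sum_congr rfl; intro q hq
    rw [Finset.sum_ite_eq' (range (n+1)) (q+2) (fun p => c p q * (-(π/4)))]
    simp only [Finset.mem_range]
    by_cases h : q + 2 ≤ n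
    · rw [if_pos (by omega), if_pos h, hc]
      dsimp only
      rw [show q + 2 + q = 2*(q+1) by ring, pow_mul, hut]
      field_simp
      ring
    · rw [if_neg (by omega), if_neg h]
  have e3 : ∑ p ∈ range (n+1), ∑ q ∈ range (n+1), (if q = p+2 then c p q * (-(π/4)) else 0)
      = ∑ p ∈ range (n+1), (if p + 2 ≤ n then ((n.choose p : ℝ) * (n.choose (p+2) : ℝ)) * t^(p+1) * (-(t/2)) else 0) := by
    apply Finset.sum_congr rfl; intro p hp
    rw [Finset.sum_ite_eq' (range (n+1)) (p+2) (fun q => c p q * (-(π/4)))]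
    simp only [Finset.mem_range]
    by_cases h : p + 2 ≤ n
    · rw [if_pos (by omega), if_pos h, hc]
      dsimp only
      rw [show p + (p + 2) = 2*(p+1) by ring, pow_mul, hut]
      field_simp
      ring
    · rw [if_neg (by omega), if_neg h]
  calc ∑ p ∈ range (n+1), ∑ q ∈ range (n+1), c p q * Jval p q
      = _ := hLHS
    _ = _ := by
        rw [e1, e2, e3]
        have hA : ∑ p ∈ range (n+1), ((n.choose p:ℝ))^2 * t^p * t
            = t * ∑ p ∈ range (n+1), ((n.choose p:ℝ))^2 * t^p := by
          rw [Finset.mul_sum]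
          exact Finset.sum_congr rfl fun p _ => by ring
        have hB : (∑ q ∈ range (n+1), if q + 2 ≤ n then ((n.choose q : ℝ) * (n.choose (q+2) : ℝ)) * t^(q+1) * (-(t/2)) else 0)
            = -(t/2) * ∑ q ∈ range (n+1), (if q + 2 ≤ n then ((n.choose q : ℝ) * (n.choose (q+2) : ℝ)) * t^(q+1) else 0) := by
          rw [Finset.mul_sum]
          apply Finset.sum_congr rfl
          intro q _
          split_ifs with h
          · ring
          · ring
        rw [hA, hB]
        ring
open MeasureTheory intervalIntegral Real Finset

lemma step2 (t : ℝ) (ht : 0 < t) (n : ℕ) :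
    ∫ x in ((1 - Real.sqrt t)^2)..((1 + Real.sqrt t)^2),
      x^n * Real.sqrt ((x - (1 - Real.sqrt t)^2) * ((1 + Real.sqrt t)^2 - x)) / (2*π) =
    ∫ θ in (0:ℝ)..π, (1 + (Real.sqrt t)^2 + 2*(Real.sqrt t)*Real.cos θ)^n * Real.sin θ^2 * (2*t/π) := by
  set u := Real.sqrt t with hu
  have hu0 : 0 < u := Real.sqrt_pos.mpr ht
  have hut : u^2 = t := Real.sq_sqrt ht.le
  set a := (1 - u)^2 with ha
  set b := (1 + u)^2 with hb
  set g0 : ℝ → ℝ := fun x => x^n * Real.sqrt ((x - a) * (b - x)) / (2*π) with hg0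
  have hg0cont : Continuous g0 := by
    apply Continuous.div_const
    exact (continuous_pow _).mul ((continuous_id.sub continuous_const).mul
      (continuous_const.sub continuous_id)).sqrt
  set f : ℝ → ℝ := fun θ => 1 + u^2 + 2*u*Real.cos θ with hf
  have hderiv : ∀ θ ∈ Set.uIcc (0:ℝ) π, HasDerivAt f (-(2*u*Real.sin θ)) θ := by
    intro θ _
    have h1 : HasDerivAt (fun θ : ℝ => Real.cos θ) (-Real.sin θ) θ := Real.hasDerivAt_cos θ
    have h2 := (h1.const_mul (2*u)).const_add (1 + u^2)
    exact h2.congr_deriv (by ring)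
  have hcontd : ContinuousOn (fun θ => -(2*u*Real.sin θ)) (Set.uIcc (0:ℝ) π) := by
    fun_prop
  have hsub := intervalIntegral.integral_comp_smul_deriv hderiv hcontd hg0cont
  have hf0 : f 0 = b := by rw [hf, hb]; simp; ring
  have hfpi : f π = a := by rw [hf, ha]; simp; ring
  rw [hf0, hfpi] at hsub
  have hflip : ∫ x in a..b, g0 x = -∫ x in b..a, g0 x := by
    rw [intervalIntegral.integral_symm]
  rw [hflip, ← hsub, ← intervalIntegral.integral_neg]
  apply intervalIntegral.integral_congr
  intro θ hθ
  rw [Set.uIcc_of_le Real.pi_pos.le] at hθ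
  obtain ⟨h0θ, hθπ⟩ := hθ
  have hsin : 0 ≤ Real.sin θ := Real.sin_nonneg_of_nonneg_of_le_pi h0θ hθπ
  have hsqrt : Real.sqrt ((f θ - a) * (b - f θ)) = 2*u*Real.sin θ := by
    have : (f θ - a) * (b - f θ) = (2*u*Real.sin θ)^2 := by
      have hsc := Real.sin_sq_add_cos_sq θ
      rw [hf, ha, hb]
      dsimp only
      linear_combination (-4*u^2) * hsc
    rw [this, Real.sqrt_sq (by positivity)]
  simp only [Function.comp_apply, smul_eq_mul, hg0]
  rw [hsqrt, ← hut]
  have hπ : π ≠ 0 := Real.pi_ne_zero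
  field_simp
  ring


lemma step1 (t : ℝ) (ht : 0 < t) (k : ℕ) (hk : 1 ≤ k) : ∫ x, x ^ k ∂(mpMeasure t) =
    ∫ x in ((1 - Real.sqrt t)^2)..((1 + Real.sqrt t)^2),
      x^(k-1) * Real.sqrt ((x - (1 - Real.sqrt t)^2) * ((1 + Real.sqrt t)^2 - x)) / (2*π) := by
  set a := (1 - Real.sqrt t)^2 with ha
  set b := (1 + Real.sqrt t)^2 with hb
  have hab : a ≤ b := by
    rw [ha, hb]
    have h0 : (0:ℝ) ≤ Real.sqrt t := Real.sqrt_nonneg t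
    nlinarith
  set v : ℝ → ℝ := fun x => if a ≤ x ∧ x ≤ b then Real.sqrt ((x - a) * (b - x)) / (2*π*x) else 0 with hv
  have hvnonneg : ∀ x, 0 ≤ v x := by
    intro x
    rw [hv]
    dsimp only
    split_ifs with h
    · rcases h with ⟨h1, h2⟩
      apply div_nonneg (Real.sqrt_nonneg _)
      have hx0 : 0 ≤ x := le_trans (sq_nonneg _) h1
      positivity
    · exact le_refl 0
  have hvmeas : Measurable v := by
    rw [hv]
    have : Measurable fun x : ℝ => Real.sqrt ((x - a) * (b - x)) / (2*π*x) := by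
      apply Measurable.div
      · fun_prop
      · fun_prop
    apply Measurable.ite _ this measurable_const
    have : {x : ℝ | a ≤ x ∧ x ≤ b} = Set.Icc a b := rfl
    rw [this]
    exact measurableSet_Icc
  set g0 : ℝ → ℝ := fun x => x^(k-1) * Real.sqrt ((x - a) * (b - x)) / (2*π) with hg0
  have hg0cont : Continuous g0 := by
    rw [hg0]
    apply Continuous.div_const
    exact (continuous_pow _).mul ((continuous_id.sub continuous_const).mul
      (continuous_const.sub continuous_id)).sqrt
  have hptwise : ∀ x : ℝ, x ≠ 0 → v x * x ^ k = (Set.Icc a b).indicator g0 x := by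
    intro x hx
    rw [hv, hg0]
    dsimp only
    by_cases hmem : a ≤ x ∧ x ≤ b
    · rw [if_pos hmem, Set.indicator_of_mem (by exact hmem)]
      have hxk : x ^ k = x ^ (k-1) * x := by
        conv_lhs => rw [show k = (k-1) + 1 from (Nat.succ_pred_eq_of_pos hk).symm]
        rw [pow_succ]
      rw [hxk]
      field_simp
    · rw [if_neg hmem, Set.indicator_of_notMem (by exact hmem), zero_mul]
  have hcompl : {x : ℝ | x ≠ 0} ∈ (ae (volume : Measure ℝ)) := by
    rw [mem_ae_iff]
    have : {x : ℝ | x ≠ 0}ᶜ = {(0:ℝ)} := by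
      ext x; simp [not_not]
    rw [this]
    exact measure_singleton 0
  have haeq : (fun x => v x * x ^ k) =ᵐ[volume] (Set.Icc a b).indicator g0 :=
    Filter.eventually_of_mem hcompl fun x hx => hptwise x hx
  have hindint : Integrable ((Set.Icc a b).indicator g0) volume :=
    (hg0cont.integrableOn_Icc).integrable_indicator measurableSet_Icc
  have hdens_meas : Measurable fun x => ENNReal.ofReal (v x) :=
    ENNReal.measurable_ofReal.comp hvmeas
  -- the two component measures
  have hint2 : Integrable (fun x : ℝ => x ^ k)
      (volume.withDensity fun x => ENNReal.ofReal (v x)) := by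
    rw [integrable_withDensity_iff hdens_meas (Filter.Eventually.of_forall fun x => ENNReal.ofReal_lt_top)]
    apply (hindint.congr ?_)
    apply haeq.symm.mono
    intro x hx
    dsimp only at hx ⊢
    rw [hx, ENNReal.toReal_ofReal (hvnonneg x)]
    ring
  have hint1 : Integrable (fun x : ℝ => x ^ k)
      (ENNReal.ofReal (max (1 - t) 0) • Measure.dirac (0:ℝ)) := by
    apply Integrable.smul_measure _ ENNReal.ofReal_ne_top
    constructor
    · exact (measurable_id.pow_const k).aestronglyMeasurable
    · simp [HasFiniteIntegral, lintegral_dirac]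
  have hmp : mpMeasure t = ENNReal.ofReal (max (1 - t) 0) • Measure.dirac 0 +
      volume.withDensity (fun x => ENNReal.ofReal (v x)) := rfl
  rw [hmp, integral_add_measure hint1 hint2]
  have hd : ∫ x, x ^ k ∂(ENNReal.ofReal (max (1 - t) 0) • Measure.dirac (0:ℝ)) = 0 := by
    rw [MeasureTheory.integral_smul_measure, integral_dirac]
    simp [zero_pow (Nat.one_le_iff_ne_zero.mp hk)]
  rw [hd, zero_add]
  -- withDensity part
  have hnn : (fun x => ENNReal.ofReal (v x)) = fun x => (((Real.toNNReal (v x)) : NNReal) : ENNReal) := rfl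
  rw [hnn, integral_withDensity_eq_integral_smul (show Measurable fun x => (v x).toNNReal from measurable_real_toNNReal.comp hvmeas) _]
  have : ∫ x : ℝ, (Real.toNNReal (v x)) • x ^ k = ∫ x, (Set.Icc a b).indicator g0 x := by
    apply MeasureTheory.integral_congr_ae
    apply haeq.mono
    intro x hx
    dsimp only at hx ⊢
    rw [← hx, NNReal.smul_def, Real.coe_toNNReal _ (hvnonneg x), smul_eq_mul]
  rw [this, MeasureTheory.integral_indicator measurableSet_Icc,
    MeasureTheory.integral_Icc_eq_integral_Ioc, ← intervalIntegral.integral_of_le hab]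


/-- The `k`-th moment of the Marchenko–Pastur distribution `ϱ_t` is the
Narayana polynomial `N_k(t) = ∑_{j=1}^k (1/j) C(k-1,j-1) C(k,j-1) t^j`. -/
theorem stmt18 (t : ℝ) (ht : 0 < t) (k : ℕ) (hk : 1 ≤ k) :
    ∫ x, x ^ k ∂(mpMeasure t) =
      ∑ j ∈ Finset.Icc 1 k,
        ((((k - 1).choose (j - 1) * k.choose (j - 1) : ℕ) : ℝ) / (j : ℝ)) * t ^ j := by
  set n := k - 1 with hn
  have hkn : k = n + 1 := (Nat.succ_pred_eq_of_pos hk).symm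
  rw [step1 t ht k hk, step2 t ht (k-1), step3 t ht (k-1), step4 t ht (k-1), ← hn]
  -- now pure algebra
  set G : ℕ → ℝ := fun p => if 1 ≤ p then ((n.choose (p-1) : ℝ) * (n.choose (p+1) : ℝ)) * t^(p+1) else 0 with hG
  have hcross : ∀ q : ℕ, (if q + 2 ≤ n then ((n.choose q : ℝ) * (n.choose (q+2) : ℝ)) * t^(q+1) else 0) * t = G (q+1) := by
    intro q
    rw [hG]
    dsimp only
    rw [if_pos (by omega : 1 ≤ q + 1)]
    by_cases h : q + 2 ≤ n
    · rw [if_pos h]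
      simp only [Nat.add_sub_cancel]
      rw [pow_succ]
      ring
    · rw [if_neg h, Nat.choose_eq_zero_of_lt (by omega : n < q + 1 + 1)]
      simp only [Nat.add_sub_cancel]
      ring
  have hsum2 : (∑ q ∈ range (n+1), if q + 2 ≤ n then ((n.choose q : ℝ) * (n.choose (q+2) : ℝ)) * t^(q+1) else 0) * t
      = ∑ p ∈ range (n+1), G p := by
    rw [Finset.sum_mul]
    rw [Finset.sum_congr rfl fun q _ => hcross q]
    have h1 : ∑ q ∈ range (n+1), G (q+1) = (∑ p ∈ range (n+2), G p) - G 0 := by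
      rw [Finset.sum_range_succ' G (n+1)]
      ring
    have h2 : ∑ p ∈ range (n+2), G p = (∑ p ∈ range (n+1), G p) + G (n+1) := Finset.sum_range_succ G (n+1)
    have hG0 : G 0 = 0 := by rw [hG]; norm_num
    have hGn : G (n+1) = 0 := by
      rw [hG]
      dsimp only
      rw [if_pos (by omega), Nat.choose_eq_zero_of_lt (by omega : n < n + 1 + 1)]
      ring
    rw [h1, h2, hG0, hGn]
    ring
  have hsum1 : t * (∑ p ∈ range (n+1), ((n.choose p : ℝ))^2 * t^p)
      = ∑ p ∈ range (n+1), ((n.choose p : ℝ))^2 * t^(p+1) := by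
    rw [Finset.mul_sum]
    exact Finset.sum_congr rfl fun p _ => by rw [pow_succ]; ring
  have hlhs : t * (∑ p ∈ range (n+1), ((n.choose p : ℝ))^2 * t^p)
      - t * (∑ q ∈ range (n+1), if q + 2 ≤ n then ((n.choose q : ℝ) * (n.choose (q+2) : ℝ)) * t^(q+1) else 0)
      = ∑ p ∈ range (n+1), (((n.choose p : ℝ))^2 - (if 1 ≤ p then ((n.choose (p-1) : ℝ) * (n.choose (p+1) : ℝ)) else 0)) * t^(p+1) := by
    rw [hsum1, mul_comm t _, hsum2, ← Finset.sum_sub_distrib]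
    apply Finset.sum_congr rfl
    intro p _
    rw [hG]
    dsimp only
    split_ifs with h
    · ring
    · ring
  rw [hlhs]
  -- apply comb_id
  have hid : ∀ p ∈ range (n+1), (((n.choose p : ℝ))^2 - (if 1 ≤ p then ((n.choose (p-1) : ℝ) * (n.choose (p+1) : ℝ)) else 0)) * t^(p+1)
      = ((n.choose p : ℝ) * (((n+1).choose p : ℝ))) / ((p : ℝ)+1) * t^(p+1) := by
    intro p hp
    rw [comb_id n p (by simpa [Finset.mem_range, Nat.lt_succ_iff] using hp)]
  rw [Finset.sum_congr rfl hid]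
  -- reindex RHS
  rw [show Finset.Icc 1 k = Finset.Ico 1 (k+1) by rw [Finset.Ico_add_one_right_eq_Icc]]
  rw [Finset.sum_Ico_eq_sum_range]
  rw [show k + 1 - 1 = n + 1 by omega]
  apply Finset.sum_congr rfl
  intro p _
  simp only [Nat.add_sub_cancel, hkn]
  rw [show 1 + p - 1 = p by omega]
  push_cast
  ring
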